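/- Let μ be a finite Borel measure on ℝ and λ > 0, and set F(x) = ∫_ℝ G_λ(y − x) μ(dy). Then for every x ∈ ℝ, F has a right derivative at x and it equals ∫_ℝ g_λ(x − y) μ(dy) − μ({x}); that is, lim_{h→0+} (F(x+h) − F(x))/h = ∫_ℝ g_λ(x − y) μ(dy) − μ({x}). -/

import Mathlib

open MeasureTheory Filter Set

/-- `G_λ(x) = (2λ)^{-1/2} · exp(-√(2λ)·|x|)`. -/
noncomputable def Gl (l : ℝ) (x : ℝ) : ℝ :=
  (2 * l) ^ (-(1/2 : ℝ)) * Real.exp (-Real.sqrt (2 * l) * |x|)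

/-- `g_λ(x) = -sgn(x) · exp(-√(2λ)·|x|)`. -/
noncomputable def gl (l : ℝ) (x : ℝ) : ℝ :=
  -Real.sign x * Real.exp (-Real.sqrt (2 * l) * |x|)

private lemma exp_neg_lip {s t : ℝ} (hs : 0 ≤ s) (ht : 0 ≤ t) :
    |Real.exp (-s) - Real.exp (-t)| ≤ |s - t| := by
  wlog h : s ≤ t generalizing s t
  · rw [abs_sub_comm, abs_sub_comm s t]; exact this ht hs (le_of_not_ge h)
  have h1 := Real.add_one_le_exp (s - t)
  have h2 : Real.exp (-s) ≤ 1 := Real.exp_le_one_iff.mpr (by linarith)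
  have h3 : Real.exp (-t) ≤ Real.exp (-s) := Real.exp_le_exp.mpr (by linarith)
  have h4 : Real.exp (-s) * Real.exp (s - t) = Real.exp (-t) := by
    rw [← Real.exp_add]; ring_nf
  rw [abs_of_nonneg (by linarith), abs_of_nonpos (by linarith)]
  nlinarith [Real.exp_pos (-s)]

private lemma key_cb {l : ℝ} (hl : 0 < l) :
    (2 * l) ^ (-(1/2 : ℝ)) * Real.sqrt (2 * l) = 1 := by
  rw [Real.sqrt_eq_rpow, ← Real.rpow_add (by linarith)]
  norm_num

private lemma Gl_lip {l : ℝ} (hl : 0 < l) (a b : ℝ) : |Gl l a - Gl l b| ≤ |a - b| := by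
  set B := Real.sqrt (2 * l) with hBdef
  set c := (2 * l) ^ (-(1/2 : ℝ)) with hcdef
  have hB : 0 ≤ B := Real.sqrt_nonneg _
  have hc : 0 ≤ c := Real.rpow_nonneg (by linarith) _
  have h1 : |Real.exp (-(B * |a|)) - Real.exp (-(B * |b|))| ≤ abs (B * |a| - B * |b|) :=
    exp_neg_lip (by positivity) (by positivity)
  have h2 : abs (B * |a| - B * |b|) = B * abs (|a| - |b|) := by
    rw [← mul_sub, abs_mul, abs_of_nonneg hB]
  have h3 : abs (|a| - |b|) ≤ |a - b| := abs_abs_sub_abs_le_abs_sub a b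
  have : |Gl l a - Gl l b| = c * |Real.exp (-(B * |a|)) - Real.exp (-(B * |b|))| := by
    simp only [Gl, ← hBdef, ← hcdef, neg_mul]
    rw [← mul_sub, abs_mul, abs_of_nonneg hc]
  rw [this]
  calc c * |Real.exp (-(B * |a|)) - Real.exp (-(B * |b|))|
      ≤ c * (B * abs (|a| - |b|)) := by rw [← h2]; exact mul_le_mul_of_nonneg_left h1 hc
    _ ≤ c * (B * |a - b|) := by
        apply mul_le_mul_of_nonneg_left (mul_le_mul_of_nonneg_left h3 hB) hc
    _ = |a - b| := by rw [← mul_assoc, key_cb hl, one_mul]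

private lemma Gl_left_quot {l : ℝ} (hl : 0 < l) (u : ℝ) :
    Tendsto (fun h : ℝ => (Gl l (u - h) - Gl l u) / h) (nhdsWithin 0 (Set.Ioi 0))
      (nhds (gl l (-u) - (if u = 0 then 1 else 0))) := by
  set B := Real.sqrt (2 * l) with hBdef
  set c := (2 * l) ^ (-(1/2 : ℝ)) with hcdef
  have hcb : c * B = 1 := key_cb hl
  have hB : 0 < B := Real.sqrt_pos.mpr (by linarith)
  set d : ℝ := if u ≤ 0 then Real.exp (B * u) else -Real.exp (-(B * u)) with hd
  have hder : HasDerivWithinAt (Gl l) d (Set.Iic u) u := by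
    by_cases hu : u ≤ 0
    · have h1 : HasDerivAt (fun v => c * Real.exp (B * v)) (c * (Real.exp (B * u) * B)) u := by
        have := ((hasDerivAt_id u).const_mul B).exp.const_mul c
        simpa using this
      have heq : c * (Real.exp (B * u) * B) = d := by
        rw [hd, if_pos hu, mul_comm (Real.exp (B * u)) B, ← mul_assoc, hcb, one_mul]
      have h2 : ∀ v ∈ Set.Iic u, Gl l v = c * Real.exp (B * v) := by
        intro v hv
        simp only [Gl, ← hBdef, ← hcdef]
        rw [abs_of_nonpos (le_trans hv hu)]
        ring_nf
      exact heq ▸ (h1.hasDerivWithinAt.congr h2 (h2 u (le_refl u)))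
    · push_neg at hu
      have h1 : HasDerivAt (fun v => c * Real.exp (-(B * v))) (c * (Real.exp (-(B * u)) * -B)) u := by
        have := (((hasDerivAt_id u).const_mul B).neg).exp.const_mul c
        simpa using this
      have heq : c * (Real.exp (-(B * u)) * -B) = d := by
        rw [hd, if_neg (not_le.mpr hu)]
        have : c * (Real.exp (-(B * u)) * -B) = -((c * B) * Real.exp (-(B * u))) := by ring
        rw [this, hcb, one_mul]
      have hev : Gl l =ᶠ[nhds u] fun v => c * Real.exp (-(B * v)) := by
        filter_upwards [Ioi_mem_nhds hu] with v hv
        simp only [Gl, ← hBdef, ← hcdef]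
        rw [abs_of_pos hv]
        ring_nf
      exact heq ▸ ((h1.congr_of_eventuallyEq hev).hasDerivWithinAt)
  have hslope := hasDerivWithinAt_iff_tendsto_slope.mp hder
  have hmaps : Tendsto (fun h : ℝ => u - h) (nhdsWithin 0 (Set.Ioi 0))
      (nhdsWithin u (Set.Iic u \ {u})) := by
    apply tendsto_nhdsWithin_of_tendsto_nhds_of_eventually_within
    · have : Tendsto (fun h : ℝ => u - h) (nhds 0) (nhds (u - 0)) :=
        tendsto_const_nhds.sub tendsto_id
      simpa using this.mono_left nhdsWithin_le_nhds
    · filter_upwards [self_mem_nhdsWithin] with h hh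
      have hh' : 0 < h := hh
      rw [Set.mem_diff, Set.mem_Iic, Set.mem_singleton_iff]
      constructor
      · linarith
      · intro hcon
        have : h = 0 := by linarith [sub_eq_self.mp hcon]
        linarith
  have hcomp : Tendsto (fun h : ℝ => -slope (Gl l) u (u - h)) (nhdsWithin 0 (Set.Ioi 0))
      (nhds (-d)) := (hslope.comp hmaps).neg
  have heqfn : (fun h : ℝ => -slope (Gl l) u (u - h)) =ᶠ[nhdsWithin 0 (Set.Ioi 0)]
      (fun h : ℝ => (Gl l (u - h) - Gl l u) / h) := by
    filter_upwards [self_mem_nhdsWithin] with h hh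
    have hh' : (0:ℝ) < h := hh
    rw [slope_def_field]
    have h1 : u - h - u = -h := by ring
    rw [h1, div_neg, neg_neg]
  have hLval : -d = gl l (-u) - (if u = 0 then 1 else 0) := by
    rcases lt_trichotomy u 0 with h | h | h
    · rw [hd, if_pos (le_of_lt h), if_neg (ne_of_lt h)]
      simp only [gl, ← hBdef]
      rw [Real.sign_of_pos (by linarith : (0:ℝ) < -u), abs_neg, abs_of_nonpos (le_of_lt h)]
      ring_nf
    · subst h
      simp only [hd, gl, Real.sign_zero, neg_zero, if_pos le_rfl, if_pos rfl]
      norm_num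
    · rw [hd, if_neg (not_le.mpr h), if_neg (ne_of_gt h)]
      simp only [gl, ← hBdef]
      rw [Real.sign_of_neg (by linarith : -u < 0), abs_neg, abs_of_pos h]
      ring_nf
  exact hLval ▸ (hcomp.congr' heqfn)

/-- Let `μ` be a finite Borel measure on `ℝ` and `λ > 0`, and set
`F(x) = ∫_ℝ G_λ(y − x) μ(dy)`. Then for every `x`, `F` has a right derivative at `x` equal to
`∫_ℝ g_λ(x − y) μ(dy) − μ({x})`. -/
theorem integral_Gl_right_deriv (μ : Measure ℝ) [IsFiniteMeasure μ] (l : ℝ) (hl : 0 < l)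
    (x : ℝ) :
    Tendsto (fun h : ℝ => ((∫ y, Gl l (y - (x + h)) ∂μ) - ∫ y, Gl l (y - x) ∂μ) / h)
      (nhdsWithin 0 (Set.Ioi 0))
      (nhds ((∫ y, gl l (x - y) ∂μ) - (μ {x}).toReal)) := by
  have hGmeas : Measurable (Gl l) := by
    unfold Gl; fun_prop
  have hGbd : ∀ v : ℝ, ‖Gl l v‖ ≤ (2 * l) ^ (-(1/2 : ℝ)) := by
    intro v
    have hc : 0 ≤ (2 * l) ^ (-(1/2 : ℝ)) := Real.rpow_nonneg (by linarith) _
    rw [Real.norm_eq_abs]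
    unfold Gl
    rw [abs_mul, abs_of_nonneg hc, Real.abs_exp]
    have : Real.exp (-Real.sqrt (2 * l) * |v|) ≤ 1 := by
      rw [Real.exp_le_one_iff]
      have := Real.sqrt_nonneg (2 * l)
      have := abs_nonneg v
      nlinarith
    nlinarith
  have hGint : ∀ z : ℝ, Integrable (fun y => Gl l (y - z)) μ := by
    intro z
    refine Integrable.mono' (integrable_const ((2 * l) ^ (-(1/2 : ℝ))))
      ((hGmeas.comp (measurable_id.sub_const z)).aestronglyMeasurable) ?_
    exact Eventually.of_forall fun y => hGbd _
  have hglmeas : Measurable (fun y : ℝ => gl l (x - y)) := by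
    unfold gl
    apply Measurable.mul
    · have hsgn : Measurable Real.sign := by
        unfold Real.sign
        exact Measurable.ite (measurableSet_lt measurable_id measurable_const) measurable_const
          (Measurable.ite (measurableSet_lt measurable_const measurable_id) measurable_const
            measurable_const)
      exact (hsgn.comp (measurable_const.sub measurable_id)).neg
    · fun_prop
  have hglbd : ∀ y : ℝ, ‖gl l (x - y)‖ ≤ 1 := by
    intro y
    rw [Real.norm_eq_abs]
    unfold gl
    rw [abs_mul, abs_neg, Real.abs_exp]
    have h1 : |Real.sign (x - y)| ≤ 1 := by
      rcases lt_trichotomy (x - y) 0 with h | h | h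
      · rw [Real.sign_of_neg h]; norm_num
      · rw [h, Real.sign_zero]; norm_num
      · rw [Real.sign_of_pos h]; norm_num
    have h2 : Real.exp (-Real.sqrt (2 * l) * |x - y|) ≤ 1 := by
      rw [Real.exp_le_one_iff]
      have := Real.sqrt_nonneg (2 * l)
      have := abs_nonneg (x - y)
      nlinarith
    have := Real.exp_pos (-Real.sqrt (2 * l) * |x - y|)
    nlinarith [abs_nonneg (Real.sign (x - y))]
  have hglint : Integrable (fun y => gl l (x - y)) μ :=
    Integrable.mono' (integrable_const 1) hglmeas.aestronglyMeasurable
      (Eventually.of_forall hglbd)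
  have hindint : Integrable (Set.indicator {x} (fun _ => (1:ℝ))) μ :=
    (integrable_const (1:ℝ)).indicator (measurableSet_singleton x)
  have hDCT := tendsto_integral_filter_of_dominated_convergence (μ := μ)
      (F := fun (h : ℝ) (y : ℝ) => (Gl l (y - x - h) - Gl l (y - x)) / h)
      (f := fun y => gl l (x - y) - Set.indicator {x} (fun _ => (1:ℝ)) y)
      (l := nhdsWithin 0 (Set.Ioi 0))
      (bound := fun _ => (1:ℝ))
      (by
        apply Eventually.of_forall
        intro h
        exact (((hGmeas.comp ((measurable_id.sub_const x).sub_const h)).sub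
          (hGmeas.comp (measurable_id.sub_const x))).div_const h).aestronglyMeasurable)
      (by
        filter_upwards [self_mem_nhdsWithin] with h hh
        have hh' : (0:ℝ) < h := hh
        apply Eventually.of_forall
        intro y
        rw [Real.norm_eq_abs, abs_div, abs_of_pos hh']
        rw [div_le_one hh']
        calc |Gl l (y - x - h) - Gl l (y - x)| ≤ |y - x - h - (y - x)| := Gl_lip hl _ _
          _ = h := by rw [show y - x - h - (y - x) = -h by ring, abs_neg, abs_of_pos hh']
        )
      (integrable_const 1)
      (by
        apply Eventually.of_forall
        intro y
        have := Gl_left_quot hl (y - x)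
        have hrw : gl l (-(y - x)) - (if y - x = 0 then (1:ℝ) else 0)
            = gl l (x - y) - Set.indicator {x} (fun _ => (1:ℝ)) y := by
          rw [neg_sub]
          congr 1
          rw [Set.indicator_apply]
          simp only [Set.mem_singleton_iff, sub_eq_zero]
        simpa only [sub_sub, hrw] using this)
  have hval : (∫ y, (gl l (x - y) - Set.indicator {x} (fun _ => (1:ℝ)) y) ∂μ)
      = (∫ y, gl l (x - y) ∂μ) - (μ {x}).toReal := by
    rw [integral_sub hglint hindint, integral_indicator_const _ (measurableSet_singleton x),
      smul_eq_mul, mul_one]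
    rfl
  rw [← hval]
  apply hDCT.congr'
  filter_upwards [self_mem_nhdsWithin] with h hh
  calc (∫ y, (Gl l (y - x - h) - Gl l (y - x)) / h ∂μ)
      = (∫ y, (Gl l (y - (x + h)) - Gl l (y - x)) ∂μ) / h := by
        rw [integral_div]; simp only [sub_sub]
    _ = ((∫ y, Gl l (y - (x + h)) ∂μ) - ∫ y, Gl l (y - x) ∂μ) / h := by
        rw [integral_sub (hGint (x + h)) (hGint x)]
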